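/- If γ ∈ M_k ⊗ M_m is a completely reducible state and n ∈ ℕ, n ≥ 1, then γ^n is a completely reducible state. Similarly the positive semidefinite n-th root γ^{1/n} and the orthogonal projection onto Im(γ) are completely reducible. -/

import Mathlib

open Matrix ComplexOrder Kronecker

def CompletelyReducible {a b : Type*} [Fintype a] [Fintype b] [DecidableEq a] [DecidableEq b]
    (γ : Matrix (a × b) (a × b) ℂ) : Prop :=
  ∀ (W : Matrix a a ℂ) (V : Matrix b b ℂ),
    W.IsHermitian → W * W = W → V.IsHermitian → V * V = V →
    (γ * (W ⊗ₖ (1 - V))).trace = 0 → (γ * ((1 - W) ⊗ₖ V)).trace = 0 →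
    γ = (W ⊗ₖ V) * γ * (W ⊗ₖ V) + ((1 - W) ⊗ₖ (1 - V)) * γ * ((1 - W) ⊗ₖ (1 - V))


set_option linter.unusedSectionVars false

variable {ι : Type*} [Fintype ι] [DecidableEq ι]

/-- trace of `Bᴴ * B` is nonnegative. -/
lemma trace_conjTranspose_mul_self_nonneg (B : Matrix ι ι ℂ) : 0 ≤ (Bᴴ * B).trace := by
  rw [Matrix.trace]
  refine Finset.sum_nonneg fun j _ => ?_
  show (0:ℂ) ≤ ∑ i, Bᴴ j i * B i j
  refine Finset.sum_nonneg fun i _ => ?_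
  rw [Matrix.conjTranspose_apply]
  exact star_mul_self_nonneg _

open scoped MatrixOrder in
lemma psd_exists_sqrt {M : Matrix ι ι ℂ} (hM : M.PosSemidef) :
    ∃ D : Matrix ι ι ℂ, D.IsHermitian ∧ D * D = M :=
  ⟨CFC.sqrt M, (CFC.sqrt_nonneg M).posSemidef.1, CFC.sqrt_mul_sqrt_self M hM.nonneg⟩

lemma psd_exists_factor {M : Matrix ι ι ℂ} (hM : M.PosSemidef) : ∃ B : Matrix ι ι ℂ, M = Bᴴ * B := by
  obtain ⟨D, hD, hDD⟩ := psd_exists_sqrt hM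
  exact ⟨D, by rw [hD.eq, hDD]⟩

lemma psd_trace_nonneg {M : Matrix ι ι ℂ} (hM : M.PosSemidef) : 0 ≤ M.trace := by
  obtain ⟨B, rfl⟩ := psd_exists_factor hM
  exact trace_conjTranspose_mul_self_nonneg B

lemma psd_eq_zero_of_trace {M : Matrix ι ι ℂ} (hM : M.PosSemidef) (h : M.trace = 0) : M = 0 := by
  obtain ⟨B, rfl⟩ := psd_exists_factor hM
  suffices hB : B = 0 by rw [hB]; simp
  ext i j
  rw [Matrix.trace] at h
  have h1 : ∀ l ∈ Finset.univ, (0:ℂ) ≤ (Bᴴ * B).diag l := by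
    intro l _
    show (0:ℂ) ≤ ∑ i, Bᴴ l i * B i l
    refine Finset.sum_nonneg fun i _ => ?_
    rw [Matrix.conjTranspose_apply]
    exact star_mul_self_nonneg _
  have h2 := (Finset.sum_eq_zero_iff_of_nonneg h1).mp h j (Finset.mem_univ j)
  have h3 : ∀ l ∈ Finset.univ, (0:ℂ) ≤ Bᴴ j l * B l j := by
    intro l _
    rw [Matrix.conjTranspose_apply]
    exact star_mul_self_nonneg _
  have h4 := (Finset.sum_eq_zero_iff_of_nonneg h3).mp h2 i (Finset.mem_univ i)
  rw [Matrix.conjTranspose_apply] at h4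
  rcases mul_eq_zero.mp h4 with h5 | h5
  · exact star_eq_zero.mp h5
  · exact h5

/-- If `A` is PSD, `E` a hermitian idempotent, and `tr(A E) = 0`, then `A E = 0 = E A`. -/
lemma psd_mul_proj_eq_zero {A E : Matrix ι ι ℂ} (hA : A.PosSemidef)
    (hE : E.IsHermitian) (hE2 : E * E = E) (h : (A * E).trace = 0) :
    A * E = 0 ∧ E * A = 0 := by
  have h1 : (E * A * E).trace = 0 := by
    rw [mul_assoc, Matrix.trace_mul_comm, mul_assoc, hE2]
    exact h
  have hpsd : (E * A * E).PosSemidef := by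
    have := hA.conjTranspose_mul_mul_same E
    rwa [hE.eq] at this
  have h0 : E * A * E = 0 := psd_eq_zero_of_trace hpsd h1
  obtain ⟨B, hB⟩ := psd_exists_factor hA
  have hBE : B * E = 0 := by
    apply Matrix.conjTranspose_mul_self_eq_zero.mp
    calc (B * E)ᴴ * (B * E) = E * (Bᴴ * B) * E := by
          rw [Matrix.conjTranspose_mul, hE.eq]; noncomm_ring
      _ = 0 := by rw [← hB, h0]
  have hAE : A * E = 0 := by rw [hB, mul_assoc, hBE, mul_zero]
  refine ⟨hAE, ?_⟩
  have := congrArg Matrix.conjTranspose hAE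
  rwa [Matrix.conjTranspose_mul, hE.eq, hA.1.eq, Matrix.conjTranspose_zero] at this

/-- For hermitian `A`, `A ^ n * M = 0` (with `n ≥ 1`) implies `A * M = 0`. -/
lemma herm_pow_mul_eq_zero {A : Matrix ι ι ℂ} (hA : A.IsHermitian) :
    ∀ n, 1 ≤ n → ∀ M : Matrix ι ι ℂ, A ^ n * M = 0 → A * M = 0 := by
  have sq : ∀ (B M : Matrix ι ι ℂ), B.IsHermitian → B * (B * M) = 0 → B * M = 0 := by
    intro B M hB h
    apply Matrix.conjTranspose_mul_self_eq_zero.mp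
    calc (B * M)ᴴ * (B * M) = Mᴴ * (B * (B * M)) := by
          rw [Matrix.conjTranspose_mul, hB.eq]; noncomm_ring
      _ = 0 := by rw [h, mul_zero]
  intro n
  induction n using Nat.strong_induction_on with
  | _ n ih =>
    intro hn M h
    match n, hn with
    | 1, _ => rwa [pow_one] at h
    | (m+2), _ =>
      have h2 : A ^ (m+1) * (A ^ (m+1) * M) = 0 := by
        have : A ^ (m+1) * A ^ (m+1) = A ^ m * A ^ (m+2) := by
          rw [← pow_add, ← pow_add]; ring_nf
        rw [← mul_assoc, this, mul_assoc, h, mul_zero]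
      have h3 : A ^ (m+1) * M = 0 := sq _ _ (hA.pow (m+1)) h2
      exact ih (m+1) (by omega) (by omega) M h3

/-- trace of a product of two PSD matrices is nonnegative. -/
lemma trace_mul_psd_nonneg {M N : Matrix ι ι ℂ} (hM : M.PosSemidef) (hN : N.PosSemidef) :
    0 ≤ (M * N).trace := by
  obtain ⟨X, hX⟩ := psd_exists_factor hM
  obtain ⟨Y, hY⟩ := psd_exists_factor hN
  have key : (M * N).trace = ((X * Yᴴ)ᴴ * (X * Yᴴ)).trace := by
    rw [hX, hY, Matrix.conjTranspose_mul, Matrix.conjTranspose_conjTranspose]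
    calc (Xᴴ * X * (Yᴴ * Y)).trace
        = (Xᴴ * (X * Yᴴ * Y)).trace := congrArg Matrix.trace (by noncomm_ring)
      _ = ((X * Yᴴ * Y) * Xᴴ).trace := Matrix.trace_mul_comm _ _
      _ = ((X * Yᴴ) * (Y * Xᴴ)).trace := congrArg Matrix.trace (by noncomm_ring)
      _ = ((Y * Xᴴ) * (X * Yᴴ)).trace := Matrix.trace_mul_comm _ _
      _ = (Y * Xᴴ * (X * Yᴴ)).trace := rfl
  rw [key]
  exact trace_conjTranspose_mul_self_nonneg _

/-- Uniqueness of the PSD n-th root. -/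
lemma psd_pow_inj {A B : Matrix ι ι ℂ} (hA : A.PosSemidef) (hB : B.PosSemidef)
    (n : ℕ) (hn : 1 ≤ n) (h : A ^ n = B ^ n) : A = B := by
  rcases eq_or_lt_of_le hn with h1 | h1
  · rw [← h1] at h; simpa using h
  -- now n ≥ 2
  set C := A - B with hC
  have hCh : C.IsHermitian := hA.1.sub hB.1
  have tele : ∑ i ∈ Finset.range n, A ^ i * C * B ^ (n - 1 - i) = 0 := by
    have ht := Finset.sum_range_sub (fun i => A ^ i * B ^ (n - i)) n
    simp only [Nat.sub_self, pow_zero, mul_one, Nat.sub_zero, pow_zero, one_mul] at ht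
    rw [h, sub_self] at ht
    rw [← ht]
    apply Finset.sum_congr rfl
    intro i hi
    have hi' : i < n := Finset.mem_range.mp hi
    rw [show n - (i + 1) = n - 1 - i from by omega,
        show n - i = (n - 1 - i) + 1 from by omega, hC, pow_succ, pow_succ']
    noncomm_ring
  have hsum : ∑ i ∈ Finset.range n, (C * (A ^ i * C * B ^ (n - 1 - i))).trace = 0 := by
    rw [← Matrix.trace_sum, ← Finset.mul_sum, tele, mul_zero, Matrix.trace_zero]
  have hterm : ∀ i ∈ Finset.range n, (0:ℂ) ≤ (C * (A ^ i * C * B ^ (n - 1 - i))).trace := by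
    intro i _
    have hpsd1 : (C * A ^ i * C).PosSemidef := by
      have := (hA.pow i).conjTranspose_mul_mul_same C
      rwa [hCh.eq] at this
    have e : C * (A ^ i * C * B ^ (n - 1 - i)) = (C * A ^ i * C) * B ^ (n - 1 - i) := by
      noncomm_ring
    rw [e]
    exact trace_mul_psd_nonneg hpsd1 (hB.pow _)
  have hzero := (Finset.sum_eq_zero_iff_of_nonneg hterm).mp hsum
  -- term i = n-1 : tr (C A^{n-1} C) = 0
  have hAC : A * C = 0 := by
    have h1' := hzero (n-1) (Finset.mem_range.mpr (by omega))
    rw [show n - 1 - (n-1) = 0 by omega, pow_zero, mul_one] at h1'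
    have hpsd1 : (C * A ^ (n-1) * C).PosSemidef := by
      have := (hA.pow (n-1)).conjTranspose_mul_mul_same C
      rwa [hCh.eq] at this
    have h0 : C * A ^ (n-1) * C = 0 := by
      apply psd_eq_zero_of_trace hpsd1
      rw [← h1']
      exact congrArg Matrix.trace (by noncomm_ring)
    obtain ⟨D, hDh, hDD⟩ := psd_exists_sqrt (hA.pow (n-1))
    have hDC : D * C = 0 := by
      apply Matrix.conjTranspose_mul_self_eq_zero.mp
      calc (D * C)ᴴ * (D * C) = C * (D * D) * C := by
            rw [Matrix.conjTranspose_mul, hCh.eq, hDh.eq]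
            noncomm_ring
        _ = 0 := by rw [hDD]; exact h0
    have hAnC : A ^ (n-1) * C = 0 := by
      rw [← hDD, mul_assoc, hDC, mul_zero]
    exact herm_pow_mul_eq_zero hA.1 (n-1) (by omega) C hAnC
  -- term i = 0 : tr (C C B^{n-1}) = 0
  have hBC : B * C = 0 := by
    have h1' := hzero 0 (Finset.mem_range.mpr (by omega))
    rw [pow_zero, one_mul, Nat.sub_zero] at h1'
    have hpsd1 : (C * B ^ (n-1) * C).PosSemidef := by
      have := (hB.pow (n-1)).conjTranspose_mul_mul_same C
      rwa [hCh.eq] at this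
    have h0 : C * B ^ (n-1) * C = 0 := by
      apply psd_eq_zero_of_trace hpsd1
      calc (C * B ^ (n-1) * C).trace = ((C * B ^ (n-1)) * C).trace := rfl
        _ = (C * (C * B ^ (n-1))).trace := Matrix.trace_mul_comm _ _
        _ = 0 := h1'
    obtain ⟨D, hDh, hDD⟩ := psd_exists_sqrt (hB.pow (n-1))
    have hDC : D * C = 0 := by
      apply Matrix.conjTranspose_mul_self_eq_zero.mp
      calc (D * C)ᴴ * (D * C) = C * (D * D) * C := by
            rw [Matrix.conjTranspose_mul, hCh.eq, hDh.eq]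
            noncomm_ring
        _ = 0 := by rw [hDD]; exact h0
    have hBnC : B ^ (n-1) * C = 0 := by
      rw [← hDD, mul_assoc, hDC, mul_zero]
    exact herm_pow_mul_eq_zero hB.1 (n-1) (by omega) C hBnC
  have hCC : C * C = 0 := by
    rw [hC, sub_mul, ← hC, hAC, hBC, sub_zero]
  have : C = 0 := by
    apply Matrix.conjTranspose_mul_self_eq_zero.mp
    rw [hCh.eq]; exact hCC
  rw [← sub_eq_zero]; exact this


lemma ext_of_mulVec {M N : Matrix ι ι ℂ} (h : ∀ x, M *ᵥ x = N *ᵥ x) : M = N := by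
  ext i j
  have := congrFun (h (Pi.single j 1)) i
  rwa [Matrix.mulVec_single_one, Matrix.mulVec_single_one] at this

lemma proj_absorb {F M : Matrix ι ι ℂ} (hF : F * F = F)
    (h : LinearMap.range M.mulVecLin ≤ LinearMap.range F.mulVecLin) : F * M = M := by
  apply ext_of_mulVec
  intro x
  obtain ⟨z, hz⟩ := h (LinearMap.mem_range.mpr ⟨x, rfl⟩)
  rw [Matrix.mulVecLin_apply, Matrix.mulVecLin_apply] at hz
  rw [← Matrix.mulVec_mulVec, ← hz, Matrix.mulVec_mulVec, hF, hz]

lemma proj_eq_of_range {E F : Matrix ι ι ℂ} (hE : E.IsHermitian) (hF : F.IsHermitian)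
    (hE2 : E * E = E) (hF2 : F * F = F)
    (h : LinearMap.range E.mulVecLin = LinearMap.range F.mulVecLin) : E = F := by
  have h1 : F * E = E := proj_absorb hF2 (le_of_eq h)
  have h2 : E * F = F := proj_absorb hE2 (le_of_eq h.symm)
  calc E = Eᴴ := hE.symm
    _ = (F * E)ᴴ := by rw [h1]
    _ = Eᴴ * Fᴴ := Matrix.conjTranspose_mul _ _
    _ = E * F := by rw [hE.eq, hF.eq]
    _ = F := h2

lemma refl_sq {P : Matrix ι ι ℂ} (hP2 : P * P = P) :
    (1 - (2:ℂ) • P) * (1 - (2:ℂ) • P) = 1 := by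
  simp only [sub_mul, mul_sub, mul_one, one_mul, smul_mul_assoc, mul_smul_comm, hP2,
    smul_smul]
  norm_num
  module

lemma refl_comm {P M : Matrix ι ι ℂ} (hc : P * M = M * P) :
    (1 - (2:ℂ) • P) * M = M * (1 - (2:ℂ) • P) := by
  rw [sub_mul, mul_sub, one_mul, mul_one, smul_mul_assoc, mul_smul_comm, hc]

lemma conj_fixed {P M : Matrix ι ι ℂ} (hP2 : P * P = P) (hc : P * M = M * P) :
    (1 - (2:ℂ) • P) * M * (1 - (2:ℂ) • P) = M := by
  rw [refl_comm hc, mul_assoc, refl_sq hP2, mul_one]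

lemma comm_of_conj {P M : Matrix ι ι ℂ} (hP2 : P * P = P)
    (h : (1 - (2:ℂ) • P) * M * (1 - (2:ℂ) • P) = M) : P * M = M * P := by
  have hU2 := refl_sq hP2
  have hUM : (1 - (2:ℂ) • P) * M = M * (1 - (2:ℂ) • P) := by
    calc (1 - (2:ℂ) • P) * M
        = (1 - (2:ℂ) • P) * M * ((1 - (2:ℂ) • P) * (1 - (2:ℂ) • P)) := by
          rw [hU2, mul_one]
      _ = ((1 - (2:ℂ) • P) * M * (1 - (2:ℂ) • P)) * (1 - (2:ℂ) • P) := by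
          rw [mul_assoc, mul_assoc, mul_assoc]
      _ = M * (1 - (2:ℂ) • P) := by rw [h]
  have h2 : (2:ℂ) • (P * M) = (2:ℂ) • (M * P) := by
    rw [sub_mul, mul_sub, one_mul, mul_one, smul_mul_assoc, mul_smul_comm] at hUM
    exact (sub_right_inj.mp hUM)
  exact smul_right_injective _ (two_ne_zero) h2

lemma unitary_conj_pow {U M : Matrix ι ι ℂ} (hU2 : U * U = 1) (n : ℕ) :
    (U * M * U) ^ n = U * M ^ n * U := by
  induction n with
  | zero => rw [pow_zero, pow_zero, mul_one, hU2]
  | succ n ih =>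
    rw [pow_succ, ih, pow_succ]
    simp only [mul_assoc]
    rw [← mul_assoc U U, hU2, one_mul]

lemma range_conj_eq {γ Pr U : Matrix ι ι ℂ} (hU2 : U * U = 1) (hUγ : U * γ = γ * U)
    (hrange : LinearMap.range Pr.mulVecLin = LinearMap.range γ.mulVecLin) :
    LinearMap.range (U * Pr * U).mulVecLin = LinearMap.range γ.mulVecLin := by
  have hswap : ∀ v, U *ᵥ (γ *ᵥ v) = γ *ᵥ (U *ᵥ v) := by
    intro v; rw [Matrix.mulVec_mulVec, Matrix.mulVec_mulVec, hUγ]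
  have hUU : ∀ v : ι → ℂ, U *ᵥ (U *ᵥ v) = v := by
    intro v; rw [Matrix.mulVec_mulVec, hU2, Matrix.one_mulVec]
  ext x
  simp only [LinearMap.mem_range, Matrix.mulVecLin_apply]
  constructor
  · rintro ⟨y, rfl⟩
    have hmem : Pr *ᵥ (U *ᵥ y) ∈ LinearMap.range γ.mulVecLin := by
      rw [← hrange]
      exact LinearMap.mem_range.mpr ⟨U *ᵥ y, rfl⟩
    obtain ⟨w, hw⟩ := LinearMap.mem_range.mp hmem
    rw [Matrix.mulVecLin_apply] at hw
    refine ⟨U *ᵥ w, ?_⟩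
    have e : (U * Pr * U) *ᵥ y = U *ᵥ (Pr *ᵥ (U *ᵥ y)) := by
      simp only [Matrix.mulVec_mulVec, mul_assoc]
    rw [e, ← hw, hswap]
  · rintro ⟨y, rfl⟩
    have hmem : U *ᵥ (γ *ᵥ y) ∈ LinearMap.range Pr.mulVecLin := by
      rw [hrange, hswap]
      exact LinearMap.mem_range.mpr ⟨U *ᵥ y, rfl⟩
    obtain ⟨w, hw⟩ := LinearMap.mem_range.mp hmem
    rw [Matrix.mulVecLin_apply] at hw
    refine ⟨U *ᵥ w, ?_⟩
    have e : (U * Pr * U) *ᵥ (U *ᵥ w) = U *ᵥ (Pr *ᵥ (U *ᵥ (U *ᵥ w))) := by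
      simp only [Matrix.mulVec_mulVec, mul_assoc]
    rw [e, hUU, hw, hUU]

lemma kron_herm {a b : Type*} [Fintype a] [Fintype b] [DecidableEq a] [DecidableEq b]
    {W : Matrix a a ℂ} {V : Matrix b b ℂ} (hW : W.IsHermitian) (hV : V.IsHermitian) :
    (W ⊗ₖ V).IsHermitian := by
  show (W ⊗ₖ V)ᴴ = W ⊗ₖ V
  ext ⟨i, j⟩ ⟨p, q⟩
  simp only [Matrix.conjTranspose_apply, Matrix.kroneckerMap_apply, star_mul']
  rw [hV.apply, hW.apply]

lemma idem_one_sub {W : Matrix ι ι ℂ} (hW2 : W * W = W) :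
    (1 - W) * (1 - W) = 1 - W := by
  simp only [sub_mul, mul_sub, one_mul, mul_one, hW2]
  abel

lemma idem_mul_one_sub {W : Matrix ι ι ℂ} (hW2 : W * W = W) : W * (1 - W) = 0 := by
  rw [mul_sub, mul_one, hW2, sub_self]

lemma idem_one_sub_mul {W : Matrix ι ι ℂ} (hW2 : W * W = W) : (1 - W) * W = 0 := by
  rw [sub_mul, one_mul, hW2, sub_self]

lemma herm_one_sub {W : Matrix ι ι ℂ} (hW : W.IsHermitian) : (1 - W).IsHermitian :=
  Matrix.isHermitian_one.sub hW


/-- The key reduction lemma. -/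
lemma reduce {a b : Type*} [Fintype a] [Fintype b] [DecidableEq a] [DecidableEq b]
    {γ A : Matrix (a × b) (a × b) ℂ}
    (hCR : CompletelyReducible γ) (hA : A.PosSemidef)
    (hker : ∀ E : Matrix (a × b) (a × b) ℂ, E.IsHermitian → E * E = E → A * E = 0 → γ * E = 0)
    (hcomm : ∀ P : Matrix (a × b) (a × b) ℂ, P.IsHermitian → P * P = P → P * γ = γ * P →
      P * A = A * P) :
    CompletelyReducible A := by
  intro W V hW hW2 hV hV2 h1 h2
  set P : Matrix (a × b) (a × b) ℂ := W ⊗ₖ V with hPdef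
  set Q : Matrix (a × b) (a × b) ℂ := (1 - W) ⊗ₖ (1 - V) with hQdef
  set R₁ : Matrix (a × b) (a × b) ℂ := W ⊗ₖ (1 - V) with hR₁def
  set R₂ : Matrix (a × b) (a × b) ℂ := (1 - W) ⊗ₖ V with hR₂def
  have hWl : W * (1 - W) = 0 := idem_mul_one_sub hW2
  have hWr : (1 - W) * W = 0 := idem_one_sub_mul hW2
  have hW2' : (1 - W) * (1 - W) = 1 - W := idem_one_sub hW2
  have hVl : V * (1 - V) = 0 := idem_mul_one_sub hV2
  have hVr : (1 - V) * V = 0 := idem_one_sub_mul hV2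
  have hV2' : (1 - V) * (1 - V) = 1 - V := idem_one_sub hV2
  -- algebra of the four projections
  have hPP : P * P = P := by rw [hPdef, ← Matrix.mul_kronecker_mul, hW2, hV2]
  have hQQ : Q * Q = Q := by rw [hQdef, ← Matrix.mul_kronecker_mul, hW2', hV2']
  have hR₁R₁ : R₁ * R₁ = R₁ := by rw [hR₁def, ← Matrix.mul_kronecker_mul, hW2, hV2']
  have hR₂R₂ : R₂ * R₂ = R₂ := by rw [hR₂def, ← Matrix.mul_kronecker_mul, hW2', hV2]
  have hPQ : P * Q = 0 := by
    rw [hPdef, hQdef, ← Matrix.mul_kronecker_mul, hWl, Matrix.zero_kronecker]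
  have hQP : Q * P = 0 := by
    rw [hPdef, hQdef, ← Matrix.mul_kronecker_mul, hWr, Matrix.zero_kronecker]
  have hPR₁ : P * R₁ = 0 := by
    rw [hPdef, hR₁def, ← Matrix.mul_kronecker_mul, hVl, Matrix.kronecker_zero]
  have hQR₁ : Q * R₁ = 0 := by
    rw [hQdef, hR₁def, ← Matrix.mul_kronecker_mul, hWr, Matrix.zero_kronecker]
  have hPR₂ : P * R₂ = 0 := by
    rw [hPdef, hR₂def, ← Matrix.mul_kronecker_mul, hWl, Matrix.zero_kronecker]
  have hQR₂ : Q * R₂ = 0 := by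
    rw [hQdef, hR₂def, ← Matrix.mul_kronecker_mul, hVr, Matrix.kronecker_zero]
  have hPherm : P.IsHermitian := kron_herm hW hV
  have hQherm : Q.IsHermitian := kron_herm (herm_one_sub hW) (herm_one_sub hV)
  have hR₁herm : R₁.IsHermitian := kron_herm hW (herm_one_sub hV)
  have hR₂herm : R₂.IsHermitian := kron_herm (herm_one_sub hW) hV
  have hsum : P + Q + R₁ + R₂ = 1 := by
    have e1 : W + (1 - W) = 1 := by abel
    have e2 : V + (1 - V) = 1 := by abel
    calc P + Q + R₁ + R₂ = (W + (1 - W)) ⊗ₖ V + (W + (1 - W)) ⊗ₖ (1 - V) := by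
          rw [Matrix.add_kronecker, Matrix.add_kronecker]
          abel
      _ = 1 ⊗ₖ (V + (1 - V)) := by rw [e1, Matrix.kronecker_add]
      _ = 1 := by rw [e2, Matrix.one_kronecker_one]
  -- from the trace conditions on A
  have hAR₁ := psd_mul_proj_eq_zero hA hR₁herm hR₁R₁ h1
  have hAR₂ := psd_mul_proj_eq_zero hA hR₂herm hR₂R₂ h2
  -- trace conditions on γ
  have hγR₁ : γ * R₁ = 0 := hker R₁ hR₁herm hR₁R₁ hAR₁.1
  have hγR₂ : γ * R₂ = 0 := hker R₂ hR₂herm hR₂R₂ hAR₂.1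
  have Hγ := hCR W V hW hW2 hV hV2 (by rw [← hR₁def, hγR₁, Matrix.trace_zero])
    (by rw [← hR₂def, hγR₂, Matrix.trace_zero])
  rw [← hPdef, ← hQdef] at Hγ
  -- γ commutes with P
  have hPγ : P * γ = γ * P := by
    have hl : P * γ = P * γ * P := by
      conv_lhs => rw [Hγ]
      rw [mul_add, ← mul_assoc, ← mul_assoc, ← mul_assoc, ← mul_assoc, hPP, hPQ, zero_mul,
        zero_mul, add_zero]
    have hr : γ * P = P * γ * P := by
      conv_lhs => rw [Hγ]
      rw [add_mul, mul_assoc (P * γ) P P, hPP, mul_assoc (Q * γ) Q P, hQP, mul_zero, add_zero]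
    rw [hl, hr]
  -- A commutes with P
  have hPA : P * A = A * P := hcomm P hPherm hPP hPγ
  -- assemble
  have hA1 : A * (P + Q) = A := by
    have h0 : A * (P + Q + R₁ + R₂) = A := by rw [hsum, mul_one]
    rw [mul_add, mul_add, hAR₁.1, hAR₂.1, add_zero, add_zero] at h0
    exact h0
  have hA2 : (P + Q) * A = A := by
    have h0 : (P + Q + R₁ + R₂) * A = A := by rw [hsum, one_mul]
    rw [add_mul, add_mul, hAR₁.2, hAR₂.2, add_zero, add_zero] at h0
    exact h0
  have hPAQ : P * (A * Q) = 0 := by rw [← mul_assoc, hPA, mul_assoc, hPQ, mul_zero]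
  have hQAP : Q * (A * P) = 0 := by
    have e : (Q * (A * P))ᴴ = P * (A * Q) := by
      rw [Matrix.conjTranspose_mul, Matrix.conjTranspose_mul, hPherm.eq, hQherm.eq, hA.1.eq,
        mul_assoc]
    calc Q * (A * P) = (Q * (A * P))ᴴᴴ := (Matrix.conjTranspose_conjTranspose _).symm
      _ = 0 := by rw [e, hPAQ, Matrix.conjTranspose_zero]
  calc A = (P + Q) * (A * (P + Q)) := by rw [hA1, hA2]
    _ = P * (A * P) + P * (A * Q) + (Q * (A * P) + Q * (A * Q)) := by
        rw [mul_add, add_mul, mul_add, mul_add]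
    _ = P * A * P + Q * A * Q := by
        rw [hPAQ, hQAP, add_zero, zero_add, mul_assoc, mul_assoc]

/-- If `γ` is a completely reducible state and `n ≥ 1`, then `γ^n`, the positive
semidefinite `n`-th root of `γ`, and the orthogonal projection onto `Im(γ)` are all completely
reducible. -/
theorem stmt11 (k m : ℕ) (γ : Matrix (Fin k × Fin m) (Fin k × Fin m) ℂ)
    (hγ : γ.PosSemidef) (hCR : CompletelyReducible γ) (n : ℕ) (hn : 1 ≤ n) :
    CompletelyReducible (γ ^ n) ∧
    (∀ δ : Matrix (Fin k × Fin m) (Fin k × Fin m) ℂ,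
      δ.PosSemidef → δ ^ n = γ → CompletelyReducible δ) ∧
    (∀ P : Matrix (Fin k × Fin m) (Fin k × Fin m) ℂ,
      P.IsHermitian → P * P = P →
      LinearMap.range P.mulVecLin = LinearMap.range γ.mulVecLin →
      CompletelyReducible P) := by
  obtain ⟨n', rfl⟩ : ∃ n', n = n' + 1 := ⟨n - 1, by omega⟩
  refine ⟨?_, ?_, ?_⟩
  · -- γ ^ n
    apply reduce hCR (hγ.pow (n' + 1))
    · intro E hE hE2 h0
      exact herm_pow_mul_eq_zero hγ.1 (n' + 1) (by omega) E h0
    · intro P hP hP2 hc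
      exact Commute.pow_right hc (n' + 1)
  · -- n-th roots
    intro δ hδ hδn
    apply reduce hCR hδ
    · intro E hE hE2 h0
      rw [← hδn, pow_succ, mul_assoc, h0, mul_zero]
    · intro P hP hP2 hc
      set U : Matrix (Fin k × Fin m) (Fin k × Fin m) ℂ := 1 - (2:ℂ) • P with hUdef
      have hU2 : U * U = 1 := refl_sq hP2
      have hUherm : Uᴴ = U := by
        rw [hUdef, Matrix.conjTranspose_sub, Matrix.conjTranspose_smul,
          Matrix.conjTranspose_one, hP.eq]
        norm_num
      have hUγU : U * γ * U = γ := conj_fixed hP2 hc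
      have hconj : (U * δ * U).PosSemidef := by
        have := hδ.conjTranspose_mul_mul_same U
        rwa [hUherm] at this
      have hpow : (U * δ * U) ^ (n' + 1) = δ ^ (n' + 1) := by
        rw [unitary_conj_pow hU2, hδn, hUγU]
      have heq : U * δ * U = δ := psd_pow_inj hconj hδ (n' + 1) (by omega) hpow
      exact comm_of_conj hP2 heq
  · -- projection onto the range
    intro Pr hPr hPr2 hrange
    have hPrPsd : Pr.PosSemidef := by
      have := Matrix.posSemidef_conjTranspose_mul_self Pr
      rwa [hPr.eq, hPr2] at this
    have hPrγ : Pr * γ = γ := proj_absorb hPr2 (le_of_eq hrange.symm)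
    have hγPr : γ * Pr = γ := by
      have e := congrArg Matrix.conjTranspose hPrγ
      rwa [Matrix.conjTranspose_mul, hPr.eq, hγ.1.eq] at e
    apply reduce hCR hPrPsd
    · intro E hE hE2 h0
      rw [← hγPr, mul_assoc, h0, mul_zero]
    · intro P hP hP2 hc
      set U : Matrix (Fin k × Fin m) (Fin k × Fin m) ℂ := 1 - (2:ℂ) • P with hUdef
      have hU2 : U * U = 1 := refl_sq hP2
      have hUherm : Uᴴ = U := by
        rw [hUdef, Matrix.conjTranspose_sub, Matrix.conjTranspose_smul,
          Matrix.conjTranspose_one, hP.eq]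
        norm_num
      have hUγ : U * γ = γ * U := refl_comm hc
      have hUPrUherm : (U * Pr * U).IsHermitian := by
        show (U * Pr * U)ᴴ = U * Pr * U
        rw [Matrix.conjTranspose_mul, Matrix.conjTranspose_mul, hUherm, hPr.eq, mul_assoc]
      have hUPrU2 : (U * Pr * U) * (U * Pr * U) = U * Pr * U := by
        calc (U * Pr * U) * (U * Pr * U) = U * (Pr * ((U * U) * (Pr * U))) := by
              simp only [mul_assoc]
          _ = U * Pr * U := by rw [hU2, one_mul, ← mul_assoc Pr Pr U, hPr2, ← mul_assoc]
      have hrange' : LinearMap.range (U * Pr * U).mulVecLin =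
          LinearMap.range Pr.mulVecLin := by
        rw [range_conj_eq hU2 hUγ hrange, hrange]
      have heq : U * Pr * U = Pr := proj_eq_of_range hUPrUherm hPr hUPrU2 hPr2 hrange'
      exact comm_of_conj hP2 heq
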